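/- Let L be a simplicial complex and let π : |L| × [0,1]^k → |L| be the projection. Given triangulations τ of |L| × [0,1]^k and θ of |L| such that π is simplicial with respect to τ and θ, the induced simplicial map ϖ between the nerves of the star-covers ξ = {St(a,τ) : a ∈ τ} and ζ = {St(b,θ) : b ∈ θ} (sending the vertex St(a,τ) to St(π(a),θ)) is well defined and every fiber of ϖ has dimension at most k. -/

import Mathlib

open Set Topology

noncomputable section

namespace Paper

/-- Order of a family of sets at most `k`: no point belongs to more than `k` members. -/
def OrderLE {X : Type*} (c : Set (Set X)) (k : ℕ) : Prop :=
  ∀ x : X, {u ∈ c | x ∈ u}.Finite ∧ {u ∈ c | x ∈ u}.ncard ≤ k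

/-- Covering dimension at most `n` (with `n : ℤ` so that `n = -1` means empty):
every open cover admits an open refinement, still covering, of order at most `n + 1`. -/
def CovDimLE (X : Type*) [TopologicalSpace X] (n : ℤ) : Prop :=
  ∀ c : Set (Set X), (∀ u ∈ c, IsOpen u) → ⋃₀ c = univ →
    ∃ d : Set (Set X), (∀ v ∈ d, IsOpen v) ∧ ⋃₀ d = univ ∧
      (∀ v ∈ d, ∃ u ∈ c, v ⊆ u) ∧ OrderLE d (n + 1).toNat

/-- Covering dimension of a subset, via the subspace topology. -/
def DimLE {X : Type*} [TopologicalSpace X] (A : Set X) (n : ℤ) : Prop :=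
  CovDimLE A n

/-- `T` separates `Z` between `B` and `C`: the complement `Z \ T` splits into two
disjoint relatively open pieces, one containing `Z ∩ B` and the other `Z ∩ C`. -/
def Separates {X : Type*} [TopologicalSpace X] (Z T B C : Set X) : Prop :=
  ∃ U V : Set X, IsOpen U ∧ IsOpen V ∧ Z \ T ⊆ U ∪ V ∧
    Disjoint (U ∩ (Z \ T)) (V ∩ (Z \ T)) ∧ Z ∩ B ⊆ U ∩ (Z \ T) ∧ Z ∩ C ⊆ V ∩ (Z \ T)

/-- `A` is σ-compact: a countable union of compact sets. -/
def IsSigmaCompact' {X : Type*} [TopologicalSpace X] (A : Set X) : Prop :=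
  ∃ K : ℕ → Set X, (∀ n, IsCompact (K n)) ∧ A = ⋃ n, K n

/-- A C-space (property C). -/
def CSpace (X : Type*) [TopologicalSpace X] : Prop :=
  ∀ α : ℕ → Set (Set X), (∀ n, (∀ u ∈ α n, IsOpen u) ∧ ⋃₀ α n = univ) →
    ∃ μ : ℕ → Set (Set X),
      (∀ n, (∀ u ∈ μ n, IsOpen u) ∧ (μ n).PairwiseDisjoint id ∧
        ∀ u ∈ μ n, ∃ v ∈ α n, u ⊆ v) ∧
      ⋃₀ (⋃ n, μ n) = univ

/-- A family of sets is discrete in `X`: every point has a neighborhood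
meeting at most one member of the family. -/
def DiscreteFamily {X : Type*} [TopologicalSpace X] (E : ℕ → Set X) : Prop :=
  ∀ x : X, ∃ W ∈ 𝓝 x, {p : ℕ | (W ∩ E p).Nonempty}.Subsingleton

/-- `E` admits a cover by open subsets of `X` of order ≤ `k` and mesh ≤ `ε`. -/
def AdmitsSmallCover {X : Type*} [MetricSpace X] (E : Set X) (k : ℕ) (ε : ℝ) : Prop :=
  ∃ c : Set (Set X), (∀ u ∈ c, IsOpen u) ∧ E ⊆ ⋃₀ c ∧
    (∀ u ∈ c, Metric.diam u ≤ ε) ∧ OrderLE c k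

/-- The unit cube `[0,1]^k`. -/
abbrev Cube (k : ℕ) : Type := Fin k → Set.Icc (0 : ℝ) 1

/-- A simplicial map between (geometric) simplicial complexes: it sends the vertex set
of each face onto the vertex set of a face and is affine on each closed simplex. -/
def IsSimplicialMap {E F : Type*} [AddCommGroup E] [Module ℝ E] [AddCommGroup F] [Module ℝ F]
    (K : Geometry.SimplicialComplex ℝ E) (L : Geometry.SimplicialComplex ℝ F)
    (p : E → F) : Prop :=
  ∀ s ∈ K.faces, (∃ t ∈ L.faces, p '' (s : Set E) = (t : Set F)) ∧
    ∃ g : E →ᵃ[ℝ] F, ∀ x ∈ convexHull ℝ (s : Set E), p x = g x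

/-- An `ω`-map relative to a subset `S` of the target: a continuous map such that the
preimage of some open cover of `S` refines `ω`. -/
def IsOmegaMapOn {X P : Type*} [TopologicalSpace X] [TopologicalSpace P]
    (κ : X → P) (S : Set P) (ω : Set (Set X)) : Prop :=
  Continuous κ ∧ ∃ c : Set (Set P), (∀ u ∈ c, IsOpen u) ∧ S ⊆ ⋃₀ c ∧
    ∀ u ∈ c, ∃ w ∈ ω, κ ⁻¹' u ⊆ w

/-- `f` admits approximation by `k`-dimensional simplicial maps. -/
def AdmitsApprox {X Y : Type*} [TopologicalSpace X] [TopologicalSpace Y]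
    (f : X → Y) (k : ℕ) : Prop :=
  ∀ ωX : Set (Set X), (∀ u ∈ ωX, IsOpen u) → ⋃₀ ωX = univ →
  ∀ ωY : Set (Set Y), (∀ u ∈ ωY, IsOpen u) → ⋃₀ ωY = univ →
    ∃ (n m : ℕ) (K : Geometry.SimplicialComplex ℝ (Fin n → ℝ))
      (L : Geometry.SimplicialComplex ℝ (Fin m → ℝ))
      (κX : X → (Fin n → ℝ)) (κY : Y → (Fin m → ℝ)) (p : (Fin n → ℝ) → (Fin m → ℝ)),
      range κX ⊆ K.space ∧ range κY ⊆ L.space ∧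
      IsOmegaMapOn κX K.space ωX ∧ IsOmegaMapOn κY L.space ωY ∧
      IsSimplicialMap K L p ∧ (∀ x, p (κX x) = κY (f x)) ∧
      ∀ z : Fin m → ℝ, DimLE {x | x ∈ K.space ∧ p x = z} (k : ℤ)

/-- The open star of a vertex `a` in a simplicial complex `K`: the points of `|K|`
not lying in any closed simplex missing `a`. -/
def openStar {E : Type*} [AddCommGroup E] [Module ℝ E]
    (K : Geometry.SimplicialComplex ℝ E) (a : E) : Set E :=
  K.space \ ⋃ s ∈ {s ∈ K.faces | a ∉ s}, convexHull ℝ (s : Set E)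

end Paper

section Aux

open Metric

/-- Covering-dimension bound for a compact set on which the first coordinate is constant:
it embeds (metrically, coordinate-wise) in `[0,1]^k`-like fashion, and the shifted-lattice
cube covers give refinements of order `k + 1`. -/
lemma dimLE_of_fst_const {m k : ℕ} (z : Fin m → ℝ)
    (A : Set ((Fin m → ℝ) × (Fin k → ℝ))) (hA : IsCompact A)
    (hz : ∀ x ∈ A, x.1 = z) : Paper.DimLE A (k : ℤ) := by
  haveI : CompactSpace A := isCompact_iff_compactSpace.mp hA
  intro c hco hcov
  -- Lebesgue number for the cover `c`
  obtain ⟨δ, δpos, hδ⟩ := lebesgue_number_lemma_of_metric_sUnion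
    (isCompact_univ : IsCompact (univ : Set A)) hco (by rw [hcov])
  -- normalized coordinates
  set g : A → Fin k → ℝ := fun x i => x.val.2 i / (δ / 2) with hg
  have hgcont : Continuous g :=
    continuous_pi fun i =>
      (((continuous_apply i).comp (continuous_snd.comp continuous_subtype_val)).div_const _)
  -- the shifted open cubes
  set Q : Fin (k + 1) → (Fin k → ℤ) → Set A := fun j v =>
    g ⁻¹' (univ.pi fun i => Ioo ((v i : ℝ) + (j : ℝ) / (k + 1))
      ((v i : ℝ) + (j : ℝ) / (k + 1) + 1)) with hQ
  have hQopen : ∀ j v, IsOpen (Q j v) :=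
    fun j v => (isOpen_set_pi finite_univ (fun i _ => isOpen_Ioo)).preimage hgcont
  have hQmem : ∀ (x : A) j v, x ∈ Q j v ↔
      ∀ i, (v i : ℝ) + (j : ℝ) / (k + 1) < g x i ∧
        g x i < (v i : ℝ) + (j : ℝ) / (k + 1) + 1 := by
    intro x j v
    simp [hQ, Set.mem_pi, Set.mem_Ioo]
  -- each point lies in `Q j v` for some good `j`, with `v` the floor vector
  have hcover : ∀ x : A, ∃ j : Fin (k + 1),
      x ∈ Q j (fun i => ⌊g x i - (j : ℝ) / (k + 1)⌋) := by
    intro x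
    -- a coordinate can "break" at most one shift `j`
    have key : ∀ i (j₁ j₂ : Fin (k + 1)),
        (∃ n : ℤ, g x i - (j₁ : ℝ) / (k + 1) = n) →
        (∃ n : ℤ, g x i - (j₂ : ℝ) / (k + 1) = n) → j₁ = j₂ := by
      intro i j₁ j₂ ⟨n₁, h₁⟩ ⟨n₂, h₂⟩
      have hk1 : (0 : ℝ) < (k : ℝ) + 1 := by positivity
      have he : ((j₂ : ℝ) - (j₁ : ℝ)) / ((k : ℝ) + 1) = (n₁ : ℝ) - n₂ := by
        rw [← div_sub_div_same]; linarith
      have hd : ((j₂ : ℝ) - (j₁ : ℝ)) = ((n₁ : ℝ) - n₂) * ((k : ℝ) + 1) :=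
        (div_eq_iff (ne_of_gt hk1)).1 he
      have hj₁ : (j₁ : ℝ) ≤ k := by
        have := j₁.is_lt
        have : (j₁ : ℕ) ≤ k := by omega
        exact_mod_cast this
      have hj₂ : (j₂ : ℝ) ≤ k := by
        have := j₂.is_lt
        have : (j₂ : ℕ) ≤ k := by omega
        exact_mod_cast this
      have hj₁0 : (0 : ℝ) ≤ (j₁ : ℝ) := by positivity
      have hj₂0 : (0 : ℝ) ≤ (j₂ : ℝ) := by positivity
      have habs : |(j₂ : ℝ) - (j₁ : ℝ)| < (k : ℝ) + 1 := by
        rw [abs_sub_lt_iff]; constructor <;> linarith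
      have hn : n₁ = n₂ := by
        by_contra hne
        have : (1 : ℝ) ≤ |(n₁ : ℝ) - n₂| := by
          have : (n₁ : ℝ) - n₂ = ((n₁ - n₂ : ℤ) : ℝ) := by push_cast; ring
          rw [this]
          exact_mod_cast Int.one_le_abs (sub_ne_zero.mpr hne)
        have : (k : ℝ) + 1 ≤ |(n₁ : ℝ) - n₂| * ((k : ℝ) + 1) := by
          nlinarith
        rw [hd, abs_mul, abs_of_pos hk1] at habs
        linarith
      have hzero : (j₂ : ℝ) - (j₁ : ℝ) = 0 := by rw [hn, sub_self, zero_mul] at hd; exact hd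
      have : (j₂ : ℕ) = (j₁ : ℕ) := by exact_mod_cast sub_eq_zero.1 hzero
      exact (Fin.ext this).symm
    -- pigeonhole: some `j` avoids all integer shifts
    have : ∃ j : Fin (k + 1), ∀ i, ¬ ∃ n : ℤ, g x i - (j : ℝ) / (k + 1) = n := by
      by_contra hcon
      push_neg at hcon
      choose F hF using hcon
      have hinj : Function.Injective F := fun j₁ j₂ h => by
        obtain ⟨n₁, h₁⟩ := hF j₁
        obtain ⟨n₂, h₂⟩ := hF j₂
        exact key (F j₁) j₁ j₂ ⟨n₁, h₁⟩ ⟨n₂, h ▸ h₂⟩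
      have := Fintype.card_le_of_injective F hinj
      simp at this
    obtain ⟨j, hj⟩ := this
    refine ⟨j, (hQmem x j _).2 fun i => ?_⟩
    have hne : (⌊g x i - (j : ℝ) / (k + 1)⌋ : ℝ) ≠ g x i - (j : ℝ) / (k + 1) :=
      fun h => hj i ⟨_, h.symm⟩
    have h1 : (⌊g x i - (j : ℝ) / (k + 1)⌋ : ℝ) < g x i - (j : ℝ) / (k + 1) :=
      lt_of_le_of_ne (Int.floor_le _) hne
    have h2 : g x i - (j : ℝ) / (k + 1) < ⌊g x i - (j : ℝ) / (k + 1)⌋ + 1 :=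
      Int.lt_floor_add_one _
    exact ⟨by linarith, by linarith⟩
  -- the refinement
  set d : Set (Set A) := {u | (∃ j v, u = Q j v) ∧ u.Nonempty} with hd
  refine ⟨d, ?_, ?_, ?_, ?_⟩
  · rintro u ⟨⟨j, v, rfl⟩, -⟩; exact hQopen j v
  · apply Set.eq_univ_of_forall
    intro x
    obtain ⟨j, hj⟩ := hcover x
    exact ⟨Q j _, ⟨⟨j, _, rfl⟩, ⟨x, hj⟩⟩, hj⟩
  · rintro u ⟨⟨j, v, rfl⟩, x₀, hx₀⟩
    obtain ⟨w, hw, hball⟩ := hδ x₀ (mem_univ _)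
    refine ⟨w, hw, fun y hy => hball ?_⟩
    rw [mem_ball]
    have h1 := (hQmem y j v).1 hy
    have h2 := (hQmem x₀ j v).1 hx₀
    have hfst : (y : (Fin m → ℝ) × (Fin k → ℝ)).1 = (x₀ : (Fin m → ℝ) × (Fin k → ℝ)).1 := by
      rw [hz _ y.prop, hz _ x₀.prop]
    have hsnd : dist (y : (Fin m → ℝ) × (Fin k → ℝ)).2
        (x₀ : (Fin m → ℝ) × (Fin k → ℝ)).2 < δ := by
      rw [dist_pi_lt_iff δpos]
      intro i
      have hyi : g y i * (δ / 2) = (y : (Fin m → ℝ) × (Fin k → ℝ)).2 i := by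
        simp only [hg]; exact div_mul_cancel₀ _ (half_pos δpos).ne'
      have hxi : g x₀ i * (δ / 2) = (x₀ : (Fin m → ℝ) × (Fin k → ℝ)).2 i := by
        simp only [hg]; exact div_mul_cancel₀ _ (half_pos δpos).ne'
      rw [Real.dist_eq, ← hyi, ← hxi, ← sub_mul, abs_mul,
        abs_of_pos (by linarith : (0:ℝ) < δ / 2)]
      have hgy := h1 i
      have hgx := h2 i
      have : |g y i - g x₀ i| < 1 := by
        rw [abs_sub_lt_iff]; constructor <;> linarith
      nlinarith
    calc dist y x₀ = dist (y : (Fin m → ℝ) × (Fin k → ℝ)) (x₀ : (Fin m → ℝ) × (Fin k → ℝ)) :=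
          Subtype.dist_eq y x₀
      _ = max (dist (y : (Fin m → ℝ) × (Fin k → ℝ)).1 (x₀ : (Fin m → ℝ) × (Fin k → ℝ)).1)
          (dist (y : (Fin m → ℝ) × (Fin k → ℝ)).2 (x₀ : (Fin m → ℝ) × (Fin k → ℝ)).2) :=
          Prod.dist_eq
      _ < δ := by rw [hfst, dist_self]; exact max_lt δpos hsnd
  · -- order at most `k + 1`
    intro x
    have hsub : {u ∈ d | x ∈ u} ⊆
        Set.range (fun j : Fin (k + 1) => Q j (fun i => ⌊g x i - (j : ℝ) / (k + 1)⌋)) := by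
      rintro u ⟨⟨⟨j, v, rfl⟩, -⟩, hxu⟩
      refine ⟨j, ?_⟩
      have hv : (fun i => ⌊g x i - (j : ℝ) / (k + 1)⌋) = v := by
        funext i
        have h := (hQmem x j v).1 hxu i
        have : (v i : ℝ) ≤ g x i - (j : ℝ) / (k + 1) := by linarith [h.1]
        have h2 : g x i - (j : ℝ) / (k + 1) < (v i : ℝ) + 1 := by linarith [h.2]
        exact Int.floor_eq_iff.mpr ⟨this, h2⟩
      show Q j _ = Q j v
      exact congrArg (Q j) hv
    have hfin : {u ∈ d | x ∈ u}.Finite :=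
      Set.Finite.subset (Set.finite_range _) hsub
    refine ⟨hfin, ?_⟩
    have h1 : {u ∈ d | x ∈ u}.ncard ≤ (Set.range
        (fun j : Fin (k + 1) => Q j (fun i => ⌊g x i - (j : ℝ) / (k + 1)⌋))).ncard :=
      Set.ncard_le_ncard hsub (Set.finite_range _)
    have h2 : (Set.range
        (fun j : Fin (k + 1) => Q j (fun i => ⌊g x i - (j : ℝ) / (k + 1)⌋))).ncard ≤ k + 1 := by
      rw [← Set.image_univ]
      refine le_trans (Set.ncard_image_le Set.finite_univ) ?_
      simp [Set.ncard_univ]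
    have h3 : ((k : ℤ) + 1).toNat = k + 1 := by omega
    rw [h3]
    exact le_trans h1 h2

/-- Well-definedness of the star map: the projection carries open stars into open stars. -/
lemma star_map_aux {m k : ℕ}
    (τ : Geometry.SimplicialComplex ℝ ((Fin m → ℝ) × (Fin k → ℝ)))
    (θ : Geometry.SimplicialComplex ℝ (Fin m → ℝ))
    (hπ : Paper.IsSimplicialMap τ θ Prod.fst)
    (a : (Fin m → ℝ) × (Fin k → ℝ)) :
    Prod.fst '' Paper.openStar τ a ⊆ Paper.openStar θ a.1 := by
  rintro _ ⟨x, ⟨hxs, hxn⟩, rfl⟩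
  obtain ⟨s, hs, hxconv⟩ := Geometry.SimplicialComplex.mem_space_iff.1 hxs
  have has : a ∈ s := by
    by_contra h
    exact hxn (Set.mem_biUnion (show s ∈ {s ∈ τ.faces | a ∉ s} from ⟨hs, h⟩) hxconv)
  obtain ⟨w, hw0, hw1, hwx⟩ := Finset.mem_convexHull'.1 hxconv
  -- `w a > 0`, else `x` lies in a face missing `a`
  have hwa : 0 < w a := by
    rcases (hw0 a has).lt_or_eq with h | h
    · exact h
    exfalso
    have hsum' : ∑ y ∈ s.erase a, w y = 1 := by
      rw [Finset.sum_erase_eq_sub has, ← h, sub_zero, hw1]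
    have hne : s.erase a ≠ ∅ := by
      intro he; rw [he, Finset.sum_empty] at hsum'; exact one_ne_zero hsum'.symm
    have hface : s.erase a ∈ τ.faces := τ.down_closed hs (Finset.erase_subset a s) (Finset.nonempty_iff_ne_empty.2 hne)
    have hxconv' : x ∈ convexHull ℝ ((s.erase a : Finset _) : Set _) := by
      refine Finset.mem_convexHull'.2 ⟨w, fun y hy => hw0 y (Finset.mem_of_mem_erase hy),
        hsum', ?_⟩
      rw [Finset.sum_erase_eq_sub has, ← h, zero_smul, sub_zero, hwx]
    exact hxn (Set.mem_biUnion
      (show s.erase a ∈ {s ∈ τ.faces | a ∉ s} from ⟨hface, Finset.notMem_erase a s⟩) hxconv')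
  -- the image face
  set t : Finset (Fin m → ℝ) := s.image Prod.fst with ht
  have htface : t ∈ θ.faces := by
    obtain ⟨⟨t₀, ht₀, himg⟩, -⟩ := hπ s hs
    have : t = t₀ := Finset.coe_injective (by rw [ht, Finset.coe_image]; exact himg)
    rw [this]; exact ht₀
  have hmaps : ∀ v ∈ s, v.1 ∈ t := fun v hv => Finset.mem_image_of_mem Prod.fst hv
  set W : (Fin m → ℝ) → ℝ := fun u => ∑ v ∈ s.filter (fun v => v.1 = u), w v with hW
  have hWsum : ∑ u ∈ t, W u = 1 := by
    rw [hW]; rw [Finset.sum_fiberwise_of_maps_to hmaps w]; exact hw1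
  have hWcomb : ∑ u ∈ t, W u • u = x.1 := by
    have step1 : ∀ u ∈ t, W u • u = ∑ v ∈ s.filter (fun v => v.1 = u), w v • v.1 := by
      intro u hu
      rw [hW, Finset.sum_smul]
      exact Finset.sum_congr rfl fun v hv => by rw [(Finset.mem_filter.1 hv).2]
    rw [Finset.sum_congr rfl step1,
      Finset.sum_fiberwise_of_maps_to hmaps (fun v => w v • v.1), ← hwx, Prod.fst_sum]
    exact Finset.sum_congr rfl fun v _ => (Prod.smul_fst _ _).symm
  have hW0 : ∀ u ∈ t, 0 ≤ W u := fun u hu =>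
    Finset.sum_nonneg fun v hv => hw0 v (Finset.mem_filter.1 hv).1
  have hx1t : x.1 ∈ convexHull ℝ (t : Set (Fin m → ℝ)) :=
    Finset.mem_convexHull'.2 ⟨W, hW0, hWsum, hWcomb⟩
  constructor
  · exact Geometry.SimplicialComplex.mem_space_iff.2 ⟨t, htface, hx1t⟩
  · -- `x.1` avoids closed simplices missing `a.1`
    intro hbad
    obtain ⟨t', ht'mem, hx1t'⟩ := Set.mem_iUnion₂.1 hbad
    obtain ⟨ht', hat'⟩ : t' ∈ θ.faces ∧ a.1 ∉ t' := ht'mem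
    have hmem'' : x.1 ∈ convexHull ℝ ((t ∩ t' : Finset _) : Set _) := by
      have := θ.inter_subset_convexHull htface ht' ⟨hx1t, hx1t'⟩
      rwa [← Finset.coe_inter] at this
    obtain ⟨w', hw'0, hw'1, hw'x⟩ := Finset.mem_convexHull'.1 hmem''
    set W' : (Fin m → ℝ) → ℝ := fun u => if u ∈ t ∩ t' then w' u else 0 with hW'
    have hW'sum : ∑ u ∈ t, W' u = 1 := by
      rw [hW']
      rw [Finset.sum_ite_mem t (t ∩ t') w',
        show t ∩ (t ∩ t') = t ∩ t' by rw [← Finset.inter_assoc, Finset.inter_self]]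
      exact hw'1
    have hW'comb : ∑ u ∈ t, W' u • u = x.1 := by
      have : ∀ u ∈ t, W' u • u = (if u ∈ t ∩ t' then w' u • u else 0) := by
        intro u hu
        show (if u ∈ t ∩ t' then w' u else 0) • u = _
        by_cases hmem : u ∈ t ∩ t'
        · rw [if_pos hmem, if_pos hmem]
        · rw [if_neg hmem, if_neg hmem, zero_smul]
      rw [Finset.sum_congr rfl this, Finset.sum_ite_mem t (t ∩ t') (fun u => w' u • u),
        show t ∩ (t ∩ t') = t ∩ t' by rw [← Finset.inter_assoc, Finset.inter_self]]
      exact hw'x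
    have hind := θ.indep htface
    have heq := hind.eq_of_sum_eq_sum (s := Finset.univ)
      (w₁ := fun u : t => W u.1) (w₂ := fun u : t => W' u.1)
      (by rw [Finset.sum_coe_sort t W, Finset.sum_coe_sort t W', hWsum, hW'sum])
      (by rw [Finset.sum_coe_sort t (fun u => W u • u),
              Finset.sum_coe_sort t (fun u => W' u • u), hWcomb, hW'comb])
    have hat : a.1 ∈ t := hmaps a has
    have hWa : W a.1 = W' a.1 := heq ⟨a.1, hat⟩ (Finset.mem_univ _)
    have hW'a : W' a.1 = 0 := by
      show (if a.1 ∈ t ∩ t' then w' a.1 else 0) = 0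
      exact if_neg (fun hmem => hat' (Finset.mem_inter.1 hmem).2)
    have hWapos : 0 < W a.1 := by
      rw [hW]
      have hafil : a ∈ s.filter (fun v => v.1 = a.1) := Finset.mem_filter.2 ⟨has, rfl⟩
      exact lt_of_lt_of_le hwa (Finset.single_le_sum
        (fun v hv => hw0 v (Finset.mem_filter.1 hv).1) hafil)
    rw [hWa, hW'a] at hWapos
    exact lt_irrefl 0 hWapos

end Aux
/-- triangulations `τ` of `|L| × [0,1]^k` and `θ` of `|L|` making the
projection simplicial.  The induced map `ϖ` between the nerves of the star-covers is
identified, via the canonical isomorphisms of the nerve of the star-cover of a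
triangulation with the triangulation itself, with the projection; well-definedness of `ϖ`
is the statement that the projection carries open stars of `τ` into open stars of `θ`,
and its fibers are the fibers of the projection restricted to `|L| × [0,1]^k`. -/
theorem stmt15 {m k : ℕ}
    (L : Geometry.SimplicialComplex ℝ (Fin m → ℝ))
    (τ : Geometry.SimplicialComplex ℝ ((Fin m → ℝ) × (Fin k → ℝ)))
    (θ : Geometry.SimplicialComplex ℝ (Fin m → ℝ))
    (hτ : τ.space = L.space ×ˢ {t : Fin k → ℝ | ∀ i, t i ∈ Set.Icc (0:ℝ) 1})
    (hθ : θ.space = L.space)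
    (hπ : Paper.IsSimplicialMap τ θ Prod.fst) :
    (∀ a ∈ τ.vertices, Prod.fst '' Paper.openStar τ a ⊆ Paper.openStar θ a.1) ∧
    (∀ z : Fin m → ℝ,
      Paper.DimLE {x : (Fin m → ℝ) × (Fin k → ℝ) | x ∈ τ.space ∧ x.1 = z} (k : ℤ)) := by
  constructor
  · intro a _
    exact star_map_aux τ θ hπ a
  · intro z
    apply dimLE_of_fst_const z
    · by_cases hzL : z ∈ L.space
      · have : {x : (Fin m → ℝ) × (Fin k → ℝ) | x ∈ τ.space ∧ x.1 = z} =
            {z} ×ˢ {t : Fin k → ℝ | ∀ i, t i ∈ Set.Icc (0:ℝ) 1} := by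
          ext x
          simp only [Set.mem_setOf_eq, hτ, Set.mem_prod, Set.mem_singleton_iff]
          constructor
          · rintro ⟨⟨-, h2⟩, h3⟩; exact ⟨h3, h2⟩
          · rintro ⟨h1, h2⟩; exact ⟨⟨h1 ▸ hzL, h2⟩, h1⟩
        rw [this]
        have hcube : IsCompact {t : Fin k → ℝ | ∀ i, t i ∈ Set.Icc (0:ℝ) 1} := by
          have : {t : Fin k → ℝ | ∀ i, t i ∈ Set.Icc (0:ℝ) 1} =
              Set.pi Set.univ (fun _ => Set.Icc (0:ℝ) 1) := by
            ext t; rw [Set.mem_univ_pi]; exact Iff.rfl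
          rw [this]
          exact isCompact_univ_pi fun _ => isCompact_Icc
        exact isCompact_singleton.prod hcube
      · have : {x : (Fin m → ℝ) × (Fin k → ℝ) | x ∈ τ.space ∧ x.1 = z} = ∅ := by
          ext x
          simp only [Set.mem_setOf_eq, hτ, Set.mem_prod, Set.mem_empty_iff_false, iff_false]
          rintro ⟨⟨h1, -⟩, h3⟩
          exact hzL (h3 ▸ h1)
        rw [this]
        exact isCompact_empty
    · rintro x ⟨-, hx⟩
      exact hx
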